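/- In a triangle inscribed in a circle of circumradius 1 with angles α at A, β at B, γ at C, if T is a point on the reflection of the circumcircle across AB, parametrized by t, and AA₁ is the cevian through T, then AA₁² = 4 sin²β sin²γ / cos²((t + α − β)/2), and similarly BB₁² = 4 sin²α sin²γ / cos²((t + α − β)/2); consequently AA₁ = BB₁ implies sin α = sin β. -/

import Mathlib

open EuclideanGeometry Real

noncomputable section

/-- The Euclidean plane. -/
abbrev Pt : Type := EuclideanSpace ℝ (Fin 2)

/-- The point of the Euclidean plane with the given coordinates. -/
def pt (x y : ℝ) : Pt := WithLp.toLp 2 ![x, y]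

lemma exists_param {p p₁ p₂ : Pt} (h : p ∈ affineSpan ℝ ({p₁, p₂} : Set Pt)) :
    ∃ r : ℝ, ∀ i, p i = r * (p₂ i - p₁ i) + p₁ i := by
  rw [show p = (p -ᵥ p₁) +ᵥ p₁ by simp] at h
  obtain ⟨r, hr⟩ := vadd_left_mem_affineSpan_pair.1 h
  refine ⟨r, fun i => ?_⟩
  have h2 := congrArg (fun q : Pt => q i) hr
  have h3 : (p₂ -ᵥ p₁) i = p₂ i - p₁ i := rfl
  have h4 : (p -ᵥ p₁) i = p i - p₁ i := rfl
  simp only [PiLp.smul_apply, smul_eq_mul, h3, h4] at h2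
  linarith

lemma dist_sq' (A A₁ : Pt) : dist A A₁ ^ 2 = (A 0 - A₁ 0)^2 + (A 1 - A₁ 1)^2 := by
  rw [EuclideanSpace.dist_eq, Real.sq_sqrt (by positivity)]
  simp [Fin.sum_univ_two, Real.dist_eq, sq_abs]

set_option maxHeartbeats 1000000 in
theorem cevian_length_on_reflected_circle (α β γ t : ℝ)
    (hα : 0 < α) (hβ : 0 < β) (hγ : 0 < γ) (hsum : α + β + γ = π)
    (A B C T A₁ B₁ : Pt)
    (hA : A = pt (-2 * sin β * cos α) 0)
    (hB : B = pt (2 * sin α * cos β) 0)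
    (hC : C = pt 0 (2 * sin α * sin β))
    (hT : T = pt (sin t + (-2 * sin β * cos α + 2 * sin α * cos β) / 2)
      (cos t - cos γ))
    (hTA : T ≠ A) (hTB : T ≠ B)
    (hA₁ : A₁ ∈ affineSpan ℝ ({A, T} : Set Pt))
    (hA₁' : A₁ ∈ affineSpan ℝ ({B, C} : Set Pt))
    (hB₁ : B₁ ∈ affineSpan ℝ ({B, T} : Set Pt))
    (hB₁' : B₁ ∈ affineSpan ℝ ({A, C} : Set Pt)) :
    dist A A₁ ^ 2 = 4 * sin β ^ 2 * sin γ ^ 2 / cos ((t + α - β) / 2) ^ 2 ∧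
    dist B B₁ ^ 2 = 4 * sin α ^ 2 * sin γ ^ 2 / cos ((t + α - β) / 2) ^ 2 ∧
    (dist A A₁ = dist B B₁ → sin α = sin β) := by
  have hsa : 0 < sin α := Real.sin_pos_of_pos_of_lt_pi hα (by linarith)
  have hsb : 0 < sin β := Real.sin_pos_of_pos_of_lt_pi hβ (by linarith)
  have hsg : 0 < sin γ := Real.sin_pos_of_pos_of_lt_pi hγ (by linarith)
  have pa := Real.sin_sq_add_cos_sq α
  have pb := Real.sin_sq_add_cos_sq β
  have pt2 := Real.sin_sq_add_cos_sq t
  have hsing : sin γ = sin α * cos β + cos α * sin β := by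
    have : γ = π - (α + β) := by linarith
    rw [this, Real.sin_pi_sub, Real.sin_add]
  have hcosg : cos γ = sin α * sin β - cos α * cos β := by
    have : γ = π - (α + β) := by linarith
    rw [this, Real.cos_pi_sub, Real.cos_add]; ring
  -- key trig factorizations
  have hL : sin β * sin t + cos β * cos t + cos α
      = 2 * cos ((t + α - β) / 2) * cos ((t - α - β) / 2) := by
    have h := Real.cos_add_cos (t - β) α
    rw [Real.cos_sub] at h
    rw [show (t - β + α) / 2 = (t + α - β) / 2 by ring,
        show (t - β - α) / 2 = (t - α - β) / 2 by ring] at h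
    linarith
  have hL' : sin α * sin t - cos α * cos t - cos β
      = -(2 * cos ((t + α + β) / 2) * cos ((t + α - β) / 2)) := by
    have h := Real.cos_add_cos (t + α) β
    rw [Real.cos_add] at h
    rw [show (t + α + β) / 2 = (t + α + β) / 2 by ring,
        show (t + α - β) / 2 = (t + α - β) / 2 by ring] at h
    linarith
  have hXY : (sin t + (sin α * cos β + cos α * sin β)) ^ 2
      + (cos t + (cos α * cos β - sin α * sin β)) ^ 2
      = 4 * cos ((t - α - β) / 2) ^ 2 := by
    have h := Real.cos_sq ((t - α - β) / 2)
    rw [show 2 * ((t - α - β) / 2) = t - (α + β) by ring] at h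
    simp only [Real.cos_sub, Real.cos_add, Real.sin_add] at h
    linear_combination (-4) * h + pt2 + (sin β ^ 2 + cos β ^ 2) * pa + pb
  have hXY' : (sin t - (sin α * cos β + cos α * sin β)) ^ 2
      + (cos t + (cos α * cos β - sin α * sin β)) ^ 2
      = 4 * cos ((t + α + β) / 2) ^ 2 := by
    have h := Real.cos_sq ((t + α + β) / 2)
    rw [show 2 * ((t + α + β) / 2) = t + (α + β) by ring] at h
    simp only [Real.cos_add, Real.sin_add] at h
    linear_combination (-4) * h + pt2 + (sin β ^ 2 + cos β ^ 2) * pa + pb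
  set D : ℝ := cos ((t + α - β) / 2) ^ 2 with hDdef
  -- coordinates
  obtain ⟨r, hr⟩ := exists_param hA₁
  obtain ⟨u, hu⟩ := exists_param hA₁'
  obtain ⟨v, hv⟩ := exists_param hB₁
  obtain ⟨w, hw⟩ := exists_param hB₁'
  subst hA hB hC hT
  have e1 := hr 0; have e2 := hr 1; have e3 := hu 0; have e4 := hu 1
  have f1 := hv 0; have f2 := hv 1; have f3 := hw 0; have f4 := hw 1
  simp only [pt, PiLp.toLp_apply, Matrix.cons_val_zero, Matrix.cons_val_one, Matrix.head_cons] at e1 e2 e3 e4 f1 f2 f3 f4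
  rw [hcosg] at e2 f2
  -- cevian parameter equations
  have h1 : r * (sin β * sin t + cos β * cos t + cos α)
      = 2 * sin β * (sin α * cos β + cos α * sin β) := by
    linear_combination (-(sin β)) * e1 + (-(cos β)) * e2 + sin β * e3 + cos β * e4
      - (r * cos α) * pb
  have h1' : v * (sin α * sin t - cos α * cos t - cos β)
      = -(2 * sin α * (sin α * cos β + cos α * sin β)) := by
    linear_combination (-(sin α)) * f1 + cos α * f2 + sin α * f3 - cos α * f4
      + (v * cos β) * pa
  -- distances
  have hd : dist (pt (-2 * sin β * cos α) 0) A₁ ^ 2 = r ^ 2 * ((sin t + (sin α * cos β + cos α * sin β)) ^ 2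
      + (cos t + (cos α * cos β - sin α * sin β)) ^ 2) := by
    rw [dist_sq']
    simp only [pt, PiLp.toLp_apply, Matrix.cons_val_zero, Matrix.cons_val_one, Matrix.head_cons]
    rw [e1, e2]
    ring
  have hd' : dist (pt (2 * sin α * cos β) 0) B₁ ^ 2 = v ^ 2 * ((sin t - (sin α * cos β + cos α * sin β)) ^ 2
      + (cos t + (cos α * cos β - sin α * sin β)) ^ 2) := by
    rw [dist_sq']
    simp only [pt, PiLp.toLp_apply, Matrix.cons_val_zero, Matrix.cons_val_one, Matrix.head_cons]
    rw [f1, f2]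
    ring
  -- main key identities
  have hkey : dist (pt (-2 * sin β * cos α) 0) A₁ ^ 2 * D = 4 * sin β ^ 2 * sin γ ^ 2 := by
    calc dist (pt (-2 * sin β * cos α) 0) A₁ ^ 2 * D
        = r ^ 2 * (((sin t + (sin α * cos β + cos α * sin β)) ^ 2
            + (cos t + (cos α * cos β - sin α * sin β)) ^ 2) * D) := by rw [hd]; ring
      _ = r ^ 2 * (4 * cos ((t - α - β) / 2) ^ 2 * D) := by rw [hXY]
      _ = (r * (2 * cos ((t + α - β) / 2) * cos ((t - α - β) / 2))) ^ 2 := by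
            rw [hDdef]; ring
      _ = (r * (sin β * sin t + cos β * cos t + cos α)) ^ 2 := by rw [hL]
      _ = (2 * sin β * (sin α * cos β + cos α * sin β)) ^ 2 := by rw [h1]
      _ = 4 * sin β ^ 2 * sin γ ^ 2 := by rw [hsing]; ring
  have hkey' : dist (pt (2 * sin α * cos β) 0) B₁ ^ 2 * D = 4 * sin α ^ 2 * sin γ ^ 2 := by
    calc dist (pt (2 * sin α * cos β) 0) B₁ ^ 2 * D
        = v ^ 2 * (((sin t - (sin α * cos β + cos α * sin β)) ^ 2
            + (cos t + (cos α * cos β - sin α * sin β)) ^ 2) * D) := by rw [hd']; ring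
      _ = v ^ 2 * (4 * cos ((t + α + β) / 2) ^ 2 * D) := by rw [hXY']
      _ = (v * (-(2 * cos ((t + α + β) / 2) * cos ((t + α - β) / 2)))) ^ 2 := by
            rw [hDdef]; ring
      _ = (v * (sin α * sin t - cos α * cos t - cos β)) ^ 2 := by rw [hL']
      _ = (-(2 * sin α * (sin α * cos β + cos α * sin β))) ^ 2 := by rw [h1']
      _ = 4 * sin α ^ 2 * sin γ ^ 2 := by rw [hsing]; ring
  have hDne : D ≠ 0 := by
    intro h0
    rw [h0, mul_zero] at hkey
    have h6 := mul_pos (mul_pos (by norm_num : (0:ℝ) < 4) (pow_pos hsb 2)) (pow_pos hsg 2)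
    linarith
  have g1 : dist (pt (-2 * sin β * cos α) 0) A₁ ^ 2 = 4 * sin β ^ 2 * sin γ ^ 2 / D := by
    rw [eq_div_iff hDne]; exact hkey
  have g2 : dist (pt (2 * sin α * cos β) 0) B₁ ^ 2 = 4 * sin α ^ 2 * sin γ ^ 2 / D := by
    rw [eq_div_iff hDne]; exact hkey'
  refine ⟨g1, g2, fun h => ?_⟩
  have hsq : dist (pt (-2 * sin β * cos α) 0) A₁ ^ 2
      = dist (pt (2 * sin α * cos β) 0) B₁ ^ 2 := by rw [h]
  have h2 : 4 * sin β ^ 2 * sin γ ^ 2 = 4 * sin α ^ 2 * sin γ ^ 2 := by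
    rw [← hkey, ← hkey', hsq]
  have h3 : sin β ^ 2 = sin α ^ 2 := by
    have h4 : (sin β ^ 2 - sin α ^ 2) * (4 * sin γ ^ 2) = 0 := by linear_combination h2
    rcases mul_eq_zero.1 h4 with h5 | h5
    · linarith
    · exact absurd h5 (by have := pow_pos hsg 2; intro h9; linarith)
  have h6 : (sin α - sin β) * (sin α + sin β) = 0 := by linear_combination (-1) * h3
  rcases mul_eq_zero.1 h6 with h7 | h7
  · linarith
  · linarith
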